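/- Let c > 0 and ω > 0. Let m : ℝ → ℝ be continuous with m(x) ≤ c and m(x) + ω > 0 for all x, and with m(x) → c as x → −∞. Then there is no twice continuously differentiable φ : ℝ → ℂ satisfying −φ'' + (1/4)φ = ((m+ω)/(4(c+ω))) φ on ℝ together with all of the following: ((m(x)+ω)/ω)^{1/4} φ(x) → 1 and φ'(x) → 0 as x → −∞; φ(x) → 0 and φ'(x) → 0 as x → +∞; and |φ'|² and (c − m)·|φ|² are integrable on ℝ. -/

import Mathlib

open MeasureTheory Filter

/-- if `m ≤ c`, `m + ω > 0` and `m → c` at `−∞` (with `c, ω > 0`),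
then there is no C² solution `φ` of `−φ'' + φ/4 = ((m+ω)/(4(c+ω)))φ` with
`((m+ω)/ω)^{1/4} φ → 1`, `φ' → 0` at `−∞`, `φ → 0`, `φ' → 0` at `+∞`, and
`|φ'|²`, `(c−m)|φ|²` integrable. -/
theorem stmt_11 (c ω : ℝ) (hc : 0 < c) (hω : 0 < ω)
    (m : ℝ → ℝ) (hm : Continuous m)
    (hmc : ∀ x, m x ≤ c) (hpos : ∀ x, m x + ω > 0)
    (hm_bot : Tendsto m atBot (nhds c)) :
    ¬ ∃ φ : ℝ → ℂ, ContDiff ℝ 2 φ ∧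
      (∀ x : ℝ,
        -(deriv (deriv φ) x) + (1 / 4) * φ x
          = (((m x + ω) / (4 * (c + ω)) : ℝ) : ℂ) * φ x) ∧
      Tendsto (fun x => ((((m x + ω) / ω) ^ ((1 : ℝ) / 4) : ℝ) : ℂ) * φ x)
        atBot (nhds 1) ∧
      Tendsto (deriv φ) atBot (nhds 0) ∧
      Tendsto φ atTop (nhds 0) ∧
      Tendsto (deriv φ) atTop (nhds 0) ∧
      Integrable (fun x => ‖deriv φ x‖ ^ 2) ∧
      Integrable (fun x => (c - m x) * ‖φ x‖ ^ 2) := by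
  rintro ⟨φ, hφ, hODE, hprod, hd_bot, hφ_top, hd_top, -, -⟩
  have hcω : (0:ℝ) < c + ω := by linarith
  -- differentiability
  have hφ1 : Differentiable ℝ φ := hφ.differentiable (by norm_num)
  have hφ2 : Differentiable ℝ (deriv φ) := by
    have h := contDiff_succ_iff_deriv.mp (show ContDiff ℝ (1+1) φ by exact_mod_cast hφ)
    exact h.2.2.differentiable one_ne_zero
  -- rewrite ODE: φ'' = q φ with q = (c - m)/(4(c+ω)) ≥ 0
  set q : ℝ → ℝ := fun x => (c - m x) / (4 * (c + ω)) with hq_def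
  have hq : ∀ x, 0 ≤ q x := fun x => div_nonneg (by linarith [hmc x]) (by linarith)
  have hODE' : ∀ x, deriv (deriv φ) x = ((q x : ℝ) : ℂ) * φ x := by
    intro x
    have hreal : q x = 1/4 - (m x + ω) / (4*(c+ω)) := by
      show (c - m x) / (4 * (c + ω)) = _
      field_simp
      ring
    have h := hODE x
    rw [hreal]
    push_cast at h ⊢
    linear_combination -h
  -- limit of φ at -∞
  set a : ℝ → ℝ := fun x => ((m x + ω) / ω) ^ ((1:ℝ)/4) with ha_def
  have ha_pos : ∀ x, 0 < a x := fun x =>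
    Real.rpow_pos_of_pos (div_pos (hpos x) hω) _
  set A : ℝ := ((c + ω) / ω) ^ ((1:ℝ)/4) with hA_def
  have hA_pos : 0 < A := Real.rpow_pos_of_pos (div_pos hcω hω) _
  have ha_tend : Tendsto a atBot (nhds A) := by
    have h1 : Tendsto (fun x => (m x + ω) / ω) atBot (nhds ((c + ω) / ω)) :=
      (hm_bot.add tendsto_const_nhds).div_const ω
    exact h1.rpow_const (Or.inr (by norm_num))
  have haC : Tendsto (fun x => ((a x : ℝ) : ℂ)) atBot (nhds ((A : ℝ) : ℂ)) :=
    (Complex.continuous_ofReal.tendsto _).comp ha_tend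
  have hAne : ((A : ℝ) : ℂ) ≠ 0 := by exact_mod_cast hA_pos.ne'
  have hφ_bot : Tendsto φ atBot (nhds (1 / ((A : ℝ) : ℂ))) := by
    have h : Tendsto (fun x => ((((m x + ω) / ω) ^ ((1 : ℝ) / 4) : ℝ) : ℂ) * φ x / ((a x : ℝ) : ℂ))
        atBot (nhds (1 / ((A : ℝ) : ℂ))) := hprod.div haC hAne
    have heq : (fun x => ((((m x + ω) / ω) ^ ((1 : ℝ) / 4) : ℝ) : ℂ) * φ x / ((a x : ℝ) : ℂ)) = φ := by
      funext x
      have hne : ((a x : ℝ) : ℂ) ≠ 0 := by exact_mod_cast (ha_pos x).ne'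
      show ((a x : ℝ) : ℂ) * φ x / ((a x : ℝ) : ℂ) = φ x
      field_simp
    rwa [heq] at h
  -- the energy function F
  set F : ℝ → ℝ := fun x => ((starRingEnd ℂ) (φ x) * deriv φ x).re with hF_def
  set e : ℝ → ℝ := fun x => ‖deriv φ x‖ ^ 2 + q x * ‖φ x‖ ^ 2 with he_def
  have hF : ∀ x, HasDerivAt F (e x) x := by
    intro x
    have hdφ : HasDerivAt φ (deriv φ x) x := (hφ1 x).hasDerivAt
    have hdφ' : HasDerivAt (deriv φ) (deriv (deriv φ) x) x := (hφ2 x).hasDerivAt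
    have hconj : HasDerivAt (fun y => (starRingEnd ℂ) (φ y)) ((starRingEnd ℂ) (deriv φ x)) x :=
      hdφ.star
    have hmul := hconj.mul hdφ'
    have hre := Complex.reCLM.hasFDerivAt.comp_hasDerivAt x hmul
    have hre' : HasDerivAt F _ x := hre
    convert hre' using 1
    rw [hODE' x]
    show e x = ((starRingEnd ℂ) (deriv φ x) * deriv φ x
      + (starRingEnd ℂ) (φ x) * (((q x : ℝ) : ℂ) * φ x)).re
    rw [he_def]
    simp [Complex.add_re, Complex.mul_re, Complex.sq_norm,
      Complex.normSq_apply]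
    ring
  have he_nonneg : ∀ x, 0 ≤ e x := fun x => by
    have := hq x; positivity
  have hFdiff : Differentiable ℝ F := fun x => (hF x).differentiableAt
  have hFmono : Monotone F :=
    monotone_of_deriv_nonneg hFdiff (fun x => by rw [(hF x).deriv]; exact he_nonneg x)
  -- limits of F at ±∞
  have hF_bot : Tendsto F atBot (nhds 0) := by
    have h : Tendsto (fun x => (starRingEnd ℂ) (φ x) * deriv φ x) atBot
        (nhds ((starRingEnd ℂ) (1 / ((A:ℝ):ℂ)) * 0)) :=
      (((Complex.continuous_conj.tendsto _).comp hφ_bot)).mul hd_bot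
    rw [mul_zero] at h
    have := (Complex.continuous_re.tendsto _).comp h
    simpa [hF_def, Function.comp_def] using this
  have hF_top : Tendsto F atTop (nhds 0) := by
    have h : Tendsto (fun x => (starRingEnd ℂ) (φ x) * deriv φ x) atTop
        (nhds ((starRingEnd ℂ) (0:ℂ) * 0)) :=
      (((Complex.continuous_conj.tendsto _).comp hφ_top)).mul hd_top
    rw [mul_zero] at h
    have := (Complex.continuous_re.tendsto _).comp h
    simpa [hF_def, Function.comp_def] using this
  -- F ≡ 0
  have hF0 : ∀ x, F x = 0 := by
    intro x
    have h1 : 0 ≤ F x :=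
      le_of_tendsto hF_bot (eventually_atBot.mpr ⟨x, fun y hy => hFmono hy⟩)
    have h2 : F x ≤ 0 :=
      ge_of_tendsto hF_top (eventually_atTop.mpr ⟨x, fun y hy => hFmono hy⟩)
    linarith
  -- hence e ≡ 0, so φ' ≡ 0
  have hd0 : ∀ x, deriv φ x = 0 := by
    intro x
    have hFc : F = fun _ => (0:ℝ) := funext hF0
    have : e x = 0 := by
      rw [← (hF x).deriv, hFc]; simp
    have h1 : 0 ≤ q x * ‖φ x‖ ^ 2 := mul_nonneg (hq x) (by positivity)
    have h2 : ‖deriv φ x‖ ^ 2 = 0 := by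
      have := he_def ▸ this
      nlinarith [sq_nonneg ‖deriv φ x‖]
    have : ‖deriv φ x‖ = 0 := by nlinarith [norm_nonneg (deriv φ x)]
    exact norm_eq_zero.mp this
  -- φ is constant, hence zero, contradiction
  have hconst : ∀ x y, φ x = φ y := is_const_of_deriv_eq_zero hφ1 hd0
  have hφ0 : ∀ x, φ x = 0 := by
    intro x
    have h1 : Tendsto φ atTop (nhds (φ x)) := by
      have : φ = fun _ => φ x := funext fun y => hconst y x
      rw [this]; exact tendsto_const_nhds
    exact tendsto_nhds_unique h1 hφ_top
  have : Tendsto (fun x => ((((m x + ω) / ω) ^ ((1 : ℝ) / 4) : ℝ) : ℂ) * φ x)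
      atBot (nhds 0) := by
    have : (fun x => ((((m x + ω) / ω) ^ ((1 : ℝ) / 4) : ℝ) : ℂ) * φ x) = fun _ => (0:ℂ) := by
      funext x; rw [hφ0 x, mul_zero]
    rw [this]; exact tendsto_const_nhds
  have h01 : (0:ℂ) = 1 := tendsto_nhds_unique this hprod
  exact zero_ne_one h01
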